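/- Define the sequence of scales L_0 = 100 and L_{k+1} = L_k³. For all constants c > 0 and β > 0 there exists k₁ ∈ ℕ such that for every k ≥ k₁ the following holds: if p, q ≥ 0 satisfy p ≤ e^{−(log L_k)^{5/4}} and q ≤ c·L_{k+1}^{28}·(p⁴ + e^{−β·L_k^{1/8}}), then q ≤ e^{−(log L_{k+1})^{5/4}}. -/

import Mathlib

set_option maxHeartbeats 1000000


/-- The scales `L₀ = 100`, `L_{k+1} = L_k³`. -/
noncomputable def Lscale : ℕ → ℝ
  | 0 => 100
  | k + 1 => (Lscale k) ^ 3

lemma Lscale_pos (k : ℕ) : 0 < Lscale k := by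
  induction k with
  | zero => norm_num [Lscale]
  | succ n ih => rw [Lscale]; positivity

lemma log_Lscale (k : ℕ) : Real.log (Lscale k) = 3 ^ k * Real.log 100 := by
  induction k with
  | zero => simp [Lscale]
  | succ n ih =>
    rw [Lscale, Real.log_pow, ih, pow_succ]
    push_cast
    ring

lemma three_rpow_lt_four : (3 : ℝ) ^ ((5 : ℝ) / 4) < 4 := by
  have h1 : (3 : ℝ) ^ ((5 : ℝ) / 4) = (243 : ℝ) ^ ((1 : ℝ) / 4) := by
    rw [show (243 : ℝ) = (3 : ℝ) ^ (5 : ℕ) by norm_num, ← Real.rpow_natCast 3 5,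
      ← Real.rpow_mul (by norm_num)]
    norm_num
  have h2 : (256 : ℝ) ^ ((1 : ℝ) / 4) = 4 := by
    rw [show (256 : ℝ) = (4 : ℝ) ^ (4 : ℕ) by norm_num, ← Real.rpow_natCast 4 4,
      ← Real.rpow_mul (by norm_num)]
    norm_num
  calc (3 : ℝ) ^ ((5 : ℝ) / 4) = (243 : ℝ) ^ ((1 : ℝ) / 4) := h1
    _ < (256 : ℝ) ^ ((1 : ℝ) / 4) :=
        Real.rpow_lt_rpow (by norm_num) (by norm_num) (by norm_num)
    _ = 4 := h2

/-- The key real-variable estimate: both exponent inequalities hold for large `a`. -/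
lemma key_estimate (c β : ℝ) (hβ : 0 < β) :
    ∃ A : ℝ, 1 ≤ A ∧ ∀ a : ℝ, A ≤ a →
      84 * a + Real.log (2 * c) ≤ (4 - (3 : ℝ) ^ ((5 : ℝ) / 4)) * a ^ ((5 : ℝ) / 4) ∧
      84 * a + Real.log (2 * c) + (3 : ℝ) ^ ((5 : ℝ) / 4) * a ^ ((5 : ℝ) / 4)
        ≤ β * Real.exp (a / 8) := by
  set t : ℝ := (3 : ℝ) ^ ((5 : ℝ) / 4) with ht
  have ht4 : t < 4 := three_rpow_lt_four
  have htpos : 0 < t := Real.rpow_pos_of_pos (by norm_num) _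
  set δ : ℝ := 4 - t with hδ
  have hδpos : 0 < δ := by simp only [hδ]; linarith
  set M : ℝ := 84 + |Real.log (2 * c)| with hM
  have hMpos : 0 < M := by positivity
  refine ⟨max 1 (max ((M / δ) ^ 4) (13824 * (M + 4) / β)), le_max_left _ _, ?_⟩
  intro a ha
  have ha1 : (1 : ℝ) ≤ a := le_trans (le_max_left _ _) ha
  have ha0 : 0 < a := by linarith
  have haMδ : (M / δ) ^ 4 ≤ a := le_trans (le_trans (le_max_left _ _) (le_max_right _ _)) ha
  have haβ : 13824 * (M + 4) / β ≤ a :=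
    le_trans (le_trans (le_max_right _ _) (le_max_right _ _)) ha
  have hsplit : a ^ ((5 : ℝ) / 4) = a ^ ((1 : ℝ) / 4) * a := by
    rw [show (5 : ℝ) / 4 = 1 / 4 + 1 by norm_num, Real.rpow_add ha0, Real.rpow_one]
  have hq : M / δ ≤ a ^ ((1 : ℝ) / 4) := by
    have h0 : (0 : ℝ) ≤ M / δ := by positivity
    have := Real.rpow_le_rpow (by positivity) haMδ (by norm_num : (0:ℝ) ≤ 1/4)
    rwa [← Real.rpow_natCast (M / δ) 4, ← Real.rpow_mul h0, show ((4:ℕ):ℝ) * (1/4) = 1 by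
      norm_num, Real.rpow_one] at this
  have hMa : 84 * a + Real.log (2 * c) ≤ M * a := by
    have h1 : Real.log (2 * c) ≤ |Real.log (2 * c)| := le_abs_self _
    have h2 : |Real.log (2 * c)| ≤ |Real.log (2 * c)| * a := le_mul_of_one_le_right (abs_nonneg _) ha1
    rw [hM]; nlinarith
  have hP : 84 * a + Real.log (2 * c) ≤ δ * a ^ ((5 : ℝ) / 4) := by
    have : M * a ≤ δ * a ^ ((5 : ℝ) / 4) := by
      rw [hsplit]
      have := mul_le_mul_of_nonneg_left hq hδpos.le
      rw [mul_div_cancel₀ _ (ne_of_gt hδpos)] at this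
      nlinarith
    exact le_trans hMa this
  refine ⟨by simpa [hδ] using hP, ?_⟩
  -- second inequality
  have h54 : a ^ ((5 : ℝ) / 4) ≤ a ^ (2 : ℕ) := by
    have := Real.rpow_le_rpow_of_exponent_le ha1 (by norm_num : (5:ℝ)/4 ≤ 2)
    rwa [Real.rpow_two] at this
  have hlin : a ≤ a ^ ((5 : ℝ) / 4) := by
    have := Real.rpow_le_rpow_of_exponent_le ha1 (by norm_num : (1:ℝ) ≤ 5/4)
    rwa [Real.rpow_one] at this
  have hLHS : 84 * a + Real.log (2 * c) + t * a ^ ((5 : ℝ) / 4) ≤ (M + 4) * a ^ (2 : ℕ) := by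
    have h1 : M * a ≤ M * a ^ ((5 : ℝ) / 4) := by nlinarith
    have h2 : a ^ ((5 : ℝ) / 4) ≤ a ^ (2 : ℕ) := h54
    have h3 : t * a ^ ((5 : ℝ) / 4) ≤ 4 * a ^ (2 : ℕ) := by
      have h0 : (0:ℝ) ≤ a ^ ((5:ℝ)/4) := Real.rpow_nonneg ha0.le _
      nlinarith
    have h4 : M * a ^ ((5 : ℝ) / 4) ≤ M * a ^ (2 : ℕ) := by nlinarith
    nlinarith
  have hexp : (a / 24) ^ 3 ≤ Real.exp (a / 8) := by
    have h1 : Real.exp (a / 8) = (Real.exp (a / 24)) ^ (3 : ℕ) := by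
      rw [← Real.exp_nat_mul]; norm_num; ring_nf
    have h2 : a / 24 ≤ Real.exp (a / 24) := by
      have := Real.add_one_le_exp (a / 24); linarith
    rw [h1]
    exact pow_le_pow_left₀ (by positivity) h2 3
  have hcube : (M + 4) * a ^ (2 : ℕ) ≤ β * ((a / 24) ^ 3) := by
    have hb : 13824 * (M + 4) ≤ β * a := by
      rw [div_le_iff₀ hβ] at haβ; linarith
    have h := mul_le_mul_of_nonneg_right hb (sq_nonneg a)
    nlinarith [h]
  calc 84 * a + Real.log (2 * c) + t * a ^ ((5 : ℝ) / 4)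
      ≤ (M + 4) * a ^ (2 : ℕ) := hLHS
    _ ≤ β * ((a / 24) ^ 3) := hcube
    _ ≤ β * Real.exp (a / 8) := by nlinarith [hexp, hβ]

/-- recursion step for the renormalisation probabilities.  For all
`c, β > 0` there is `k₁` such that for `k ≥ k₁`: if `p ≤ e^{−(log L_k)^{5/4}}` and
`q ≤ c·L_{k+1}^{28}·(p⁴ + e^{−β·L_k^{1/8}})`, then `q ≤ e^{−(log L_{k+1})^{5/4}}`. -/
theorem renormalisation_recursion
    (c β : ℝ) (hc : 0 < c) (hβ : 0 < β) :
    ∃ k₁ : ℕ, ∀ k : ℕ, k₁ ≤ k → ∀ p q : ℝ, 0 ≤ p → 0 ≤ q →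
      p ≤ Real.exp (-(Real.log (Lscale k)) ^ ((5 : ℝ) / 4)) →
      q ≤ c * (Lscale (k + 1)) ^ (28 : ℕ) *
            (p ^ 4 + Real.exp (-β * (Lscale k) ^ ((1 : ℝ) / 8))) →
      q ≤ Real.exp (-(Real.log (Lscale (k + 1))) ^ ((5 : ℝ) / 4)) := by
  obtain ⟨A, hA1, hA⟩ := key_estimate c β hβ
  obtain ⟨k₁, hk₁⟩ := pow_unbounded_of_one_lt (R := ℝ) A (by norm_num : (1:ℝ) < 3)
  refine ⟨k₁, fun k hk p q hp hq hpk hqk => ?_⟩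
  -- `a = log L_k` is large
  set a : ℝ := Real.log (Lscale k) with hadef
  have hlog100 : (1 : ℝ) ≤ Real.log 100 := by
    rw [Real.le_log_iff_exp_le (by norm_num : (0:ℝ) < 100)]
    calc Real.exp 1 ≤ 2.7182818286 := Real.exp_one_lt_d9.le
      _ ≤ 100 := by norm_num
  have haA : A ≤ a := by
    rw [hadef, log_Lscale]
    calc A ≤ 3 ^ k₁ := hk₁.le
      _ ≤ 3 ^ k := pow_le_pow_right₀ (by norm_num) hk
      _ ≤ 3 ^ k * Real.log 100 := le_mul_of_one_le_right (by positivity) hlog100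
  have ha0 : (0 : ℝ) < a := by linarith
  obtain ⟨hP, hQ⟩ := hA a haA
  -- rewrite the scales as exponentials
  have hlogk1 : Real.log (Lscale (k + 1)) = 3 * a := by
    rw [show Lscale (k+1) = (Lscale k) ^ 3 from rfl, Real.log_pow]; push_cast; ring
  have hLk : Lscale k = Real.exp a := (Real.exp_log (Lscale_pos k)).symm
  have hL28 : (Lscale (k + 1)) ^ (28 : ℕ) = Real.exp (84 * a) := by
    have h1 : Lscale (k + 1) = Real.exp (3 * a) := by
      rw [← hlogk1, Real.exp_log (Lscale_pos (k+1))]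
    rw [h1, ← Real.exp_nat_mul]
    norm_num; ring_nf
  have hL18 : (Lscale k) ^ ((1 : ℝ) / 8) = Real.exp (a / 8) := by
    rw [Real.rpow_def_of_pos (Lscale_pos k), ← hadef]
    ring_nf
  have hp4 : p ^ 4 ≤ Real.exp (-(4 * a ^ ((5 : ℝ) / 4))) := by
    calc p ^ 4 ≤ (Real.exp (-a ^ ((5 : ℝ) / 4))) ^ 4 := pow_le_pow_left₀ hp hpk 4
      _ = Real.exp (-(4 * a ^ ((5 : ℝ) / 4))) := by
          rw [← Real.exp_nat_mul]; norm_num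
  -- the two exponential bounds
  set t : ℝ := (3 : ℝ) ^ ((5 : ℝ) / 4) with ht
  have h3a : (3 * a) ^ ((5 : ℝ) / 4) = t * a ^ ((5 : ℝ) / 4) :=
    Real.mul_rpow (by norm_num) ha0.le
  have hlog2c : Real.log (2 * c) = Real.log 2 + Real.log c :=
    Real.log_mul (by norm_num) (ne_of_gt hc)
  have hterm1 : c * Real.exp (84 * a) * Real.exp (-(4 * a ^ ((5 : ℝ) / 4)))
      ≤ (1 / 2) * Real.exp (-(t * a ^ ((5 : ℝ) / 4))) := by
    have hc' : c = Real.exp (Real.log c) := (Real.exp_log hc).symm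
    have h12 : (1 : ℝ) / 2 = Real.exp (-(Real.log 2)) := by
      rw [Real.exp_neg, Real.exp_log (by norm_num : (0:ℝ) < 2)]; norm_num
    rw [hc', h12, ← Real.exp_add, ← Real.exp_add, ← Real.exp_add, Real.exp_le_exp]
    have hδ : (4 - t) * a ^ ((5 : ℝ) / 4) = 4 * a ^ ((5:ℝ)/4) - t * a ^ ((5:ℝ)/4) := sub_mul _ _ _
    rw [hδ] at hP
    rw [hlog2c] at hP
    linarith
  have hterm2 : c * Real.exp (84 * a) * Real.exp (-β * Real.exp (a / 8))
      ≤ (1 / 2) * Real.exp (-(t * a ^ ((5 : ℝ) / 4))) := by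
    have hc' : c = Real.exp (Real.log c) := (Real.exp_log hc).symm
    have h12 : (1 : ℝ) / 2 = Real.exp (-(Real.log 2)) := by
      rw [Real.exp_neg, Real.exp_log (by norm_num : (0:ℝ) < 2)]; norm_num
    rw [hc', h12, ← Real.exp_add, ← Real.exp_add, ← Real.exp_add, Real.exp_le_exp]
    rw [hlog2c] at hQ
    linarith
  -- put everything together
  have hfinal : c * (Lscale (k + 1)) ^ (28 : ℕ) *
      (p ^ 4 + Real.exp (-β * (Lscale k) ^ ((1 : ℝ) / 8)))
      ≤ Real.exp (-(t * a ^ ((5 : ℝ) / 4))) := by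
    rw [hL28, hL18]
    have hsum : p ^ 4 + Real.exp (-β * Real.exp (a / 8))
        ≤ Real.exp (-(4 * a ^ ((5:ℝ)/4))) + Real.exp (-β * Real.exp (a / 8)) := by linarith
    calc c * Real.exp (84 * a) * (p ^ 4 + Real.exp (-β * Real.exp (a / 8)))
        ≤ c * Real.exp (84 * a) *
            (Real.exp (-(4 * a ^ ((5:ℝ)/4))) + Real.exp (-β * Real.exp (a / 8))) := by
          apply mul_le_mul_of_nonneg_left hsum (by positivity)
      _ = c * Real.exp (84 * a) * Real.exp (-(4 * a ^ ((5:ℝ)/4)))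
            + c * Real.exp (84 * a) * Real.exp (-β * Real.exp (a / 8)) := by ring
      _ ≤ (1/2) * Real.exp (-(t * a ^ ((5:ℝ)/4))) + (1/2) * Real.exp (-(t * a ^ ((5:ℝ)/4))) :=
          add_le_add hterm1 hterm2
      _ = Real.exp (-(t * a ^ ((5:ℝ)/4))) := by ring
  calc q ≤ _ := hqk
    _ ≤ Real.exp (-(t * a ^ ((5 : ℝ) / 4))) := hfinal
    _ = Real.exp (-(Real.log (Lscale (k + 1))) ^ ((5 : ℝ) / 4)) := by
        rw [hlogk1, h3a]
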